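/- Let |Φ⟩ and |χ⟩ be vectors in a finite-dimensional Hilbert space with |Φ⟩ nonzero. The operator A = |Φ⟩⟨χ| + |χ⟩⟨Φ| is positive semidefinite if and only if |χ⟩ = λ|Φ⟩ for some complex number λ with nonnegative real part. -/

import Mathlib

open Matrix
open scoped ComplexOrder

private lemma quad_vecMulVec {n : ℕ} (a b x : Fin n → ℂ) :
    star x ⬝ᵥ ((vecMulVec a (star b)) *ᵥ x) = (star x ⬝ᵥ a) * (star b ⬝ᵥ x) := by
  simp only [dotProduct, mulVec, vecMulVec_apply, Finset.sum_mul, Finset.mul_sum]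
  rw [Finset.sum_comm]
  exact Finset.sum_congr rfl fun i _ => Finset.sum_congr rfl fun j _ => by ring

private lemma conj_eq_aux (z : ℂ) : (starRingEnd ℂ) z = 2 * (z.re : ℂ) - z := by
  have h := Complex.add_conj z
  push_cast at h
  linear_combination h

/-- The operator `A = |Φ⟩⟨χ| + |χ⟩⟨Φ|` (with `Φ ≠ 0`) is positive semidefinite iff
`χ = λ Φ` for some complex `λ` with nonnegative real part. -/
theorem rankOne_sum_posSemidef_iff {n : ℕ} (Φ χ : Fin n → ℂ) (hΦ : Φ ≠ 0) :
    (vecMulVec Φ (star χ) + vecMulVec χ (star Φ)).PosSemidef ↔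
      ∃ lam : ℂ, 0 ≤ lam.re ∧ χ = lam • Φ := by
  have quad : ∀ x : Fin n → ℂ,
      star x ⬝ᵥ ((vecMulVec Φ (star χ) + vecMulVec χ (star Φ)) *ᵥ x)
        = (star x ⬝ᵥ Φ) * (star χ ⬝ᵥ x) + (star x ⬝ᵥ χ) * (star Φ ⬝ᵥ x) := by
    intro x
    rw [add_mulVec, dotProduct_add, quad_vecMulVec, quad_vecMulVec]
  rw [posSemidef_iff_dotProduct_mulVec]
  constructor
  · rintro ⟨-, hQ⟩
    set P : ℂ := star Φ ⬝ᵥ Φ with hPdef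
    have hP0 : 0 ≤ P := dotProduct_star_self_nonneg Φ
    have hPne : P ≠ 0 := fun h => hΦ (dotProduct_star_self_eq_zero.mp h)
    have hPim : P.im = 0 := (Complex.nonneg_iff.mp hP0).2.symm
    have hPreal : P = ((P.re : ℝ) : ℂ) := Complex.ext rfl (by simp [hPim])
    have hPre : 0 < P.re := by
      rcases lt_or_eq_of_le (Complex.nonneg_iff.mp hP0).1 with h | h
      · exact h
      · exact absurd (Complex.ext h.symm hPim) hPne
    set c : ℂ := star Φ ⬝ᵥ χ with hcdef
    have hcc : (starRingEnd ℂ) c = 2 * (c.re : ℂ) - c := conj_eq_aux c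
    -- step 1: 0 ≤ c.re
    have hcre : 0 ≤ c.re := by
      have hQΦ := hQ Φ
      rw [quad Φ] at hQΦ
      have hsc : star χ ⬝ᵥ Φ = (starRingEnd ℂ) c := star_dotProduct χ Φ
      have h1 : (0:ℂ) ≤ ((2 * P.re * c.re : ℝ) : ℂ) := by
        have heq : (star Φ ⬝ᵥ Φ) * (star χ ⬝ᵥ Φ) + (star Φ ⬝ᵥ χ) * (star Φ ⬝ᵥ Φ)
            = ((2 * P.re * c.re : ℝ) : ℂ) := by
          rw [hsc, ← hcdef, ← hPdef, hcc, hPreal]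
          push_cast
          simp only [Complex.ofReal_re]
          ring
        rw [heq] at hQΦ; exact hQΦ
      have := Complex.zero_le_real.mp h1
      nlinarith
    set lam : ℂ := c / P with hlamdef
    have hlamP : lam * P = c := div_mul_cancel₀ c hPne
    have hlamre : 0 ≤ lam.re := by
      rw [hlamdef, hPreal, Complex.div_ofReal_re]
      positivity
    refine ⟨lam, hlamre, ?_⟩
    set ψ : Fin n → ℂ := χ - lam • Φ with hψdef
    have hχ : χ = ψ + lam • Φ := by rw [hψdef]; ring_nf
    have hoΦψ : star Φ ⬝ᵥ ψ = 0 := by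
      rw [hψdef, dotProduct_sub, dotProduct_smul, smul_eq_mul, ← hPdef, ← hcdef, hlamP,
        sub_self]
    have hoψΦ : star ψ ⬝ᵥ Φ = 0 := by
      rw [star_dotProduct, hoΦψ, star_zero]
    set S : ℂ := star ψ ⬝ᵥ ψ with hSdef
    have hS0 : 0 ≤ S := dotProduct_star_self_nonneg ψ
    have hSim : S.im = 0 := (Complex.nonneg_iff.mp hS0).2.symm
    have hSreal : S = ((S.re : ℝ) : ℂ) := Complex.ext rfl (by simp [hSim])
    have hSre : 0 ≤ S.re := (Complex.nonneg_iff.mp hS0).1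
    have hclam : (starRingEnd ℂ) lam = 2 * (lam.re : ℂ) - lam := conj_eq_aux lam
    -- key inequality for real test parameter a
    have key : ∀ a : ℝ, 0 ≤ 2 * a * P.re * S.re + 2 * a ^ 2 * P.re ^ 2 * lam.re := by
      intro a
      have hx := hQ (ψ + ((a : ℝ) : ℂ) • Φ)
      rw [quad] at hx
      have h1 : star (ψ + ((a : ℝ) : ℂ) • Φ) ⬝ᵥ Φ = ((a : ℝ) : ℂ) * P := by
        simp [star_add, star_smul, add_dotProduct, smul_dotProduct, hoψΦ, ← hPdef,
          smul_eq_mul]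
      have h2 : star Φ ⬝ᵥ (ψ + ((a : ℝ) : ℂ) • Φ) = ((a : ℝ) : ℂ) * P := by
        simp [dotProduct_add, dotProduct_smul, hoΦψ, ← hPdef, smul_eq_mul]
      have h3 : star χ ⬝ᵥ (ψ + ((a : ℝ) : ℂ) • Φ)
          = S + (starRingEnd ℂ) lam * (((a : ℝ) : ℂ) * P) := by
        rw [hχ]
        simp [star_add, star_smul, add_dotProduct, smul_dotProduct, dotProduct_add,
          dotProduct_smul, hoΦψ, hoψΦ, ← hPdef, ← hSdef, smul_eq_mul]
        try ring
      have h4 : star (ψ + ((a : ℝ) : ℂ) • Φ) ⬝ᵥ χ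
          = S + lam * (((a : ℝ) : ℂ) * P) := by
        rw [hχ]
        simp [star_add, star_smul, add_dotProduct, smul_dotProduct, dotProduct_add,
          dotProduct_smul, hoΦψ, hoψΦ, ← hPdef, ← hSdef, smul_eq_mul]
        try ring
      rw [h1, h2, h3, h4] at hx
      have heq : ((a : ℝ) : ℂ) * P * (S + (starRingEnd ℂ) lam * (((a : ℝ) : ℂ) * P))
          + (S + lam * (((a : ℝ) : ℂ) * P)) * (((a : ℝ) : ℂ) * P)
          = ((2 * a * P.re * S.re + 2 * a ^ 2 * P.re ^ 2 * lam.re : ℝ) : ℂ) := by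
        rw [hclam, hPreal, hSreal]
        push_cast
        simp only [Complex.ofReal_re]
        ring
      rw [heq] at hx
      exact Complex.zero_le_real.mp hx
    -- conclude S.re = 0
    have hSzero : S.re = 0 := by
      by_contra h
      have hSpos : 0 < S.re := lt_of_le_of_ne hSre (Ne.symm h)
      have hd : 0 < P.re * lam.re + 1 := by nlinarith
      have hk := key (-S.re / (P.re * lam.re + 1))
      have h3 : (2 * (-S.re / (P.re * lam.re + 1)) * P.re * S.re
            + 2 * (-S.re / (P.re * lam.re + 1)) ^ 2 * P.re ^ 2 * lam.re)
            * (P.re * lam.re + 1) ^ 2 = -2 * P.re * S.re ^ 2 := by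
        field_simp
        ring
      have h4 : 0 ≤ -2 * P.re * S.re ^ 2 := h3 ▸ mul_nonneg hk (sq_nonneg _)
      nlinarith [mul_pos hPre (mul_pos hSpos hSpos)]
    have hψ0 : ψ = 0 := by
      have : S = 0 := by rw [hSreal, hSzero]; simp
      exact dotProduct_star_self_eq_zero.mp (hSdef ▸ this)
    rw [hψdef] at hψ0
    exact sub_eq_zero.mp hψ0
  · rintro ⟨lam, hlam, rfl⟩
    constructor
    · ext i j
      simp only [conjTranspose_apply, Matrix.add_apply, vecMulVec_apply, Pi.star_apply,
        Pi.smul_apply, smul_eq_mul, star_add, star_mul', star_star]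
      ring
    · intro x
      rw [quad]
      set w : ℂ := star Φ ⬝ᵥ x with hwdef
      have h1 : star x ⬝ᵥ Φ = (starRingEnd ℂ) w := star_dotProduct x Φ
      have h2 : star (lam • Φ) ⬝ᵥ x = (starRingEnd ℂ) lam * w := by
        simp [star_smul, smul_dotProduct, ← hwdef, smul_eq_mul]
      have h3 : star x ⬝ᵥ (lam • Φ) = lam * (starRingEnd ℂ) w := by
        rw [dotProduct_smul, smul_eq_mul, h1]
      rw [h1, h2, h3]
      have hclam : (starRingEnd ℂ) lam = 2 * (lam.re : ℂ) - lam := conj_eq_aux lam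
      have heq : (starRingEnd ℂ) w * ((starRingEnd ℂ) lam * w)
          + lam * (starRingEnd ℂ) w * w = ((2 * lam.re * Complex.normSq w : ℝ) : ℂ) := by
        rw [hclam]
        push_cast
        rw [Complex.normSq_eq_conj_mul_self]
        ring
      rw [heq]
      exact Complex.zero_le_real.mpr
        (mul_nonneg (by linarith) (Complex.normSq_nonneg w))
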